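/- arXiv:1307.6940 — 3 statements merged into one kernel-verified Lean document; each statement's English description precedes it below -/
import Mathlib

section
/- Let A be a strongly Γ-graded ring and n ≥ 3. Then the graded elementary group E_n(A)(α_1,...,α_n), generated by elementary matrices e_{i,j}(r) with r ∈ A_{α_i - α_j} and i ≠ j, is a perfect group: it equals its own commutator subgroup. -/
open Pointwise

section Aux

variable {A : Type*} [Ring A] {n : ℕ}

def eUnit (i j : Fin n) (hij : i ≠ j) (r : A) : (Matrix (Fin n) (Fin n) A)ˣ where
  val := 1 + Matrix.single i j r
  inv := 1 - Matrix.single i j r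
  val_inv := by
    have h : Matrix.single i j r * Matrix.single i j r = 0 :=
      Matrix.single_mul_single_of_ne _ _ _ _ (Ne.symm hij) _
    noncomm_ring
    rw [h]; simp
  inv_val := by
    have h : Matrix.single i j r * Matrix.single i j r = 0 :=
      Matrix.single_mul_single_of_ne _ _ _ _ (Ne.symm hij) _
    noncomm_ring
    rw [h]; simp

theorem eUnit_add (i j : Fin n) (hij : i ≠ j) (r s : A) :
    eUnit i j hij (r + s) = eUnit i j hij r * eUnit i j hij s := by
  refine Units.ext ?_
  have h : Matrix.single i j r * Matrix.single i j s = 0 :=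
    Matrix.single_mul_single_of_ne _ _ _ _ (Ne.symm hij) _
  show (1 : Matrix (Fin n) (Fin n) A) + _ = (1 + _) * (1 + _)
  rw [Matrix.single_add]
  noncomm_ring
  rw [h]; abel

theorem eUnit_zero (i j : Fin n) (hij : i ≠ j) :
    eUnit i j hij (0 : A) = 1 := by
  refine Units.ext ?_
  show (1 : Matrix (Fin n) (Fin n) A) + _ = 1
  simp

open scoped commutatorElement in
theorem eUnit_commutator (i j k : Fin n) (hij : i ≠ j) (hik : i ≠ k) (hkj : k ≠ j)
    (s t : A) : ⁅eUnit i k hik s, eUnit k j hkj t⁆ = eUnit i j hij (s * t) := by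
  refine Units.ext ?_
  show ((1 : Matrix (Fin n) (Fin n) A) + _) * (1 + _) * (1 - _) * (1 - _) = 1 + _
  set P := Matrix.single i k s with hP
  set Q := Matrix.single k j t with hQ
  have hPP : P * P = 0 := Matrix.single_mul_single_of_ne _ _ _ _ (Ne.symm hik) _
  have hQQ : Q * Q = 0 := Matrix.single_mul_single_of_ne _ _ _ _ (Ne.symm hkj) _
  have hQP : Q * P = 0 := Matrix.single_mul_single_of_ne _ _ _ _ (Ne.symm hij) _
  have hPQ : P * Q = Matrix.single i j (s * t) :=
    Matrix.single_mul_single_same _ _ _ _ _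
  rw [← hPQ]
  noncomm_ring
  simp [← mul_assoc, hPP, hQP, hQQ]


theorem eUnit_neg {i j : Fin n} (hij : i ≠ j) (r : A) :
    eUnit i j hij (-r) = (eUnit i j hij r)⁻¹ := by
  apply eq_inv_of_mul_eq_one_right
  rw [← eUnit_add]
  simpa using eUnit_zero i j hij

end Aux

/-- The graded elementary subgroup `E_n(A)(α₁,…,αₙ)`: the subgroup of invertible `n × n`
matrices over `A` generated by the elementary matrices `e_{i,j}(r) = 1 + r·E_{ij}` with
`r ∈ A_{αᵢ - αⱼ}` and `i ≠ j`. -/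
def gradedElementary {Γ A : Type*} [AddCommGroup Γ] [Ring A] (𝒜 : Γ → AddSubgroup A)
    (n : ℕ) (α : Fin n → Γ) : Subgroup (Matrix (Fin n) (Fin n) A)ˣ :=
  Subgroup.closure {g : (Matrix (Fin n) (Fin n) A)ˣ | ∃ i j : Fin n, ∃ r : A, i ≠ j ∧ r ∈ 𝒜 (α i - α j) ∧
    g.val = 1 + Matrix.single i j r}

/-- If `A` is a strongly `Γ`-graded ring and `n ≥ 3`, then the graded elementary group
`E_n(A)(α₁,…,αₙ)` is perfect: it equals its own commutator subgroup. -/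
theorem gradedElementary_perfect {Γ A : Type*} [AddCommGroup Γ] [DecidableEq Γ] [Ring A]
    (𝒜 : Γ → AddSubgroup A) [GradedRing 𝒜]
    (hstrong : ∀ lam δ : Γ, AddSubgroup.closure ((𝒜 lam : Set A) * (𝒜 δ : Set A)) = 𝒜 (lam + δ))
    (n : ℕ) (hn : 3 ≤ n) (α : Fin n → Γ) :
    ⁅gradedElementary 𝒜 n α, gradedElementary 𝒜 n α⁆ = gradedElementary 𝒜 n α := by
  set G := gradedElementary 𝒜 n α with hG
  refine le_antisymm (Subgroup.commutator_le.mpr fun g₁ h₁ g₂ h₂ => by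
    rw [commutatorElement_def]
    exact mul_mem (mul_mem (mul_mem h₁ h₂) (inv_mem h₁)) (inv_mem h₂)) ?_
  · rw [hG, gradedElementary]
    refine (Subgroup.closure_le _).mpr ?_
    rintro g ⟨i, j, r, hij, hr, hval⟩
    obtain ⟨k, hki, hkj⟩ : ∃ k : Fin n, k ≠ i ∧ k ≠ j := by
      by_contra h
      push_neg at h
      have hsub : (Finset.univ : Finset (Fin n)) ⊆ {i, j} := fun x _ => by
        by_cases hx : x = i
        · simp [hx]
        · simp [h x hx]
      have hcard := Finset.card_le_card hsub
      have : ({i, j} : Finset (Fin n)).card ≤ 2 :=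
        le_trans (Finset.card_insert_le _ _) (by simp)
      simp [Finset.card_univ] at hcard
      omega
    have hg : g = eUnit i j hij r := Units.ext hval
    rw [hg]
    have hr' : r ∈ AddSubgroup.closure ((𝒜 (α i - α k) : Set A) * (𝒜 (α k - α j) : Set A)) := by
      rw [hstrong, sub_add_sub_cancel]; exact hr
    clear hg hval hr
    induction hr' using AddSubgroup.closure_induction with
    | mem x hx =>
      obtain ⟨s, hs, t, ht, rfl⟩ := hx
      rw [← eUnit_commutator i j k hij (Ne.symm hki) hkj s t]
      exact Subgroup.commutator_mem_commutator
        (Subgroup.subset_closure ⟨i, k, s, Ne.symm hki, hs, rfl⟩)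
        (Subgroup.subset_closure ⟨k, j, t, hkj, ht, rfl⟩)
    | zero => rw [eUnit_zero]; exact one_mem _
    | add x y hx hy px py => rw [eUnit_add]; exact mul_mem px py
    | neg x hx px => rw [eUnit_neg]; exact inv_mem px
end

section
/- Let A be a strongly Γ-graded ring and α ∈ Γ. Then there exist a finitely generated graded projective A-module P, an integer m, and a graded isomorphism A(α) ⊕ P ≅ A(0)^m. -/
open Pointwise

private lemma neg_list_sum {A B : Type*} [AddCommGroup B] (f : A → B) :
    ∀ l : List A, -(l.map f).sum = (l.map fun x => -(f x)).sum
  | [] => by simp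
  | a :: tl => by simp [neg_add, neg_list_sum f tl, add_comm]

private lemma closure_mul_rep {A : Type*} [Ring A] (S T : AddSubgroup A)
    (x : A) (hx : x ∈ AddSubgroup.closure ((S : Set A) * (T : Set A))) :
    ∃ l : List (A × A), (∀ p ∈ l, p.1 ∈ S ∧ p.2 ∈ T) ∧ x = (l.map fun p => p.1 * p.2).sum := by
  induction hx using AddSubgroup.closure_induction with
  | mem y hy =>
    obtain ⟨s, hs, t, ht, rfl⟩ := hy
    refine ⟨[(s, t)], ?_, by simp⟩
    rintro p hp
    simp only [List.mem_singleton] at hp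
    subst hp
    exact ⟨hs, ht⟩
  | zero => exact ⟨[], by simp, by simp⟩
  | add y z _ _ hy hz =>
    obtain ⟨l1, h1, rfl⟩ := hy
    obtain ⟨l2, h2, rfl⟩ := hz
    exact ⟨l1 ++ l2, by
      intro p hp
      rcases List.mem_append.1 hp with h | h
      · exact h1 p h
      · exact h2 p h, by simp⟩
  | neg y _ hy =>
    obtain ⟨l, hl, rfl⟩ := hy
    refine ⟨l.map fun p => (-p.1, p.2), ?_, ?_⟩
    · intro p hp
      simp only [List.mem_map] at hp
      obtain ⟨q, hq, rfl⟩ := hp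
      exact ⟨neg_mem (hl q hq).1, (hl q hq).2⟩
    · rw [List.map_map]
      simp only [Function.comp_def, neg_mul]
      exact neg_list_sum (fun p => p.1 * p.2) l

/-- Let `A` be a strongly `Γ`-graded ring and `α ∈ Γ`.  Then the shifted module `A(α)` is
a graded direct summand of a finite free graded module with trivial shifts: there are `m`
and `A`-linear maps `f : A(α) → A(0)ᵐ` and `g : A(0)ᵐ → A(α)` which are degree-preserving
(`A(α)_λ = A_{α+λ}` and `A(0)ᵐ_λ = (A_λ)ᵐ`) with `g ∘ f = id`; equivalently
`A(α) ⊕ P ≅ A(0)ᵐ` with `P = ker g` a finitely generated graded projective module. -/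
theorem shifted_module_summand_of_trivially_shifted_free
    {Γ A : Type*} [AddCommGroup Γ] [DecidableEq Γ] [Ring A]
    (𝒜 : Γ → AddSubgroup A) [GradedRing 𝒜]
    (hstrong : ∀ lam δ : Γ, AddSubgroup.closure ((𝒜 lam : Set A) * (𝒜 δ : Set A)) = 𝒜 (lam + δ))
    (α : Γ) :
    ∃ (m : ℕ) (f : A →ₗ[A] (Fin m → A)) (g : (Fin m → A) →ₗ[A] A),
      (∀ lam : Γ, ∀ a ∈ 𝒜 (α + lam), ∀ i : Fin m, f a i ∈ 𝒜 lam) ∧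
      (∀ lam : Γ, ∀ v : Fin m → A, (∀ i : Fin m, v i ∈ 𝒜 lam) → g v ∈ 𝒜 (α + lam)) ∧
      g.comp f = LinearMap.id := by
  have h1 : (1 : A) ∈ AddSubgroup.closure ((𝒜 (-α) : Set A) * (𝒜 α : Set A)) := by
    rw [hstrong (-α) α, neg_add_cancel]
    exact SetLike.one_mem_graded 𝒜
  obtain ⟨l, hl, hsum⟩ := closure_mul_rep (𝒜 (-α)) (𝒜 α) 1 h1
  set m := l.length with hm
  set s : Fin m → A := fun i => (l.get i).1 with hs
  set t : Fin m → A := fun i => (l.get i).2 with ht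
  have hs_mem : ∀ i, s i ∈ 𝒜 (-α) := fun i => (hl _ (l.get_mem i)).1
  have ht_mem : ∀ i, t i ∈ 𝒜 α := fun i => (hl _ (l.get_mem i)).2
  have hone : ∑ i : Fin m, s i * t i = 1 := by
    rw [hsum, ← List.sum_ofFn (f := fun i : Fin m => s i * t i)]
    congr 1
    conv_rhs => rw [← List.ofFn_get l]
    rw [List.map_ofFn]
    rfl
  refine ⟨m, ?_, ?_, ?_, ?_, ?_⟩
  · exact { toFun := fun a i => a * s i
            map_add' := fun a b => by ext i; simp [add_mul]
            map_smul' := fun c a => by ext i; simp [mul_assoc, smul_eq_mul] }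
  · exact { toFun := fun v => ∑ i, v i * t i
            map_add' := fun v w => by simp [add_mul, Finset.sum_add_distrib]
            map_smul' := fun c v => by simp [Finset.mul_sum, mul_assoc, smul_eq_mul] }
  · intro lam a ha i
    have := SetLike.mul_mem_graded ha (hs_mem i)
    convert this using 2
    abel
    rfl
  · intro lam v hv
    show ∑ i : Fin m, v i * t i ∈ 𝒜 (α + lam)
    refine AddSubgroup.sum_mem _ fun i _ => ?_
    have := SetLike.mul_mem_graded (hv i) (ht_mem i)
    convert this using 2
    abel
  · apply LinearMap.ext
    intro a
    simp only [LinearMap.comp_apply, LinearMap.coe_mk, AddHom.coe_mk, LinearMap.id_apply]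
    calc ∑ i, a * s i * t i = a * ∑ i, s i * t i := by
          rw [Finset.mul_sum]; exact Finset.sum_congr rfl fun i _ => (mul_assoc _ _ _)
      _ = a := by rw [hone, mul_one]
end

section
/- Let A be a strongly Γ-graded ring. Then every finitely generated graded projective A-module is a graded direct summand of a free graded module A(0)^m with trivial shifts, for some m. -/
open Pointwise

universe u

/-- Any element of the additive closure of a product of two additive subgroups is a finite
sum of products. -/
lemma exists_fin_repr {A : Type u} [Ring A] (S T : AddSubgroup A) {z : A}
    (hz : z ∈ AddSubgroup.closure ((S : Set A) * (T : Set A))) :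
    ∃ (n : ℕ) (a b : Fin n → A), (∀ j, a j ∈ S) ∧ (∀ j, b j ∈ T) ∧ ∑ j, a j * b j = z := by
  refine AddSubgroup.closure_induction ?_ ?_ ?_ ?_ hz
  · rintro x ⟨s, hs, t, ht, rfl⟩
    exact ⟨1, fun _ => s, fun _ => t, fun _ => hs, fun _ => ht, by simp⟩
  · exact ⟨0, fun j => j.elim0, fun j => j.elim0, fun j => j.elim0, fun j => j.elim0, by simp⟩
  · rintro x y hx hy ⟨n₁, a₁, b₁, ha₁, hb₁, hs₁⟩ ⟨n₂, a₂, b₂, ha₂, hb₂, hs₂⟩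
    refine ⟨n₁ + n₂, Fin.append a₁ a₂, Fin.append b₁ b₂, ?_, ?_, ?_⟩
    · intro j
      refine Fin.addCases (fun j => ?_) (fun j => ?_) j <;>
        simp [Fin.append_left, Fin.append_right, ha₁, ha₂]
    · intro j
      refine Fin.addCases (fun j => ?_) (fun j => ?_) j <;>
        simp [Fin.append_left, Fin.append_right, hb₁, hb₂]
    · rw [Fin.sum_univ_add]
      simp [Fin.append_left, Fin.append_right, hs₁, hs₂]
  · rintro x hx ⟨n, a, b, ha, hb, hs⟩
    refine ⟨n, fun j => -(a j), b, fun j => neg_mem (ha j), hb, ?_⟩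
    simp only [neg_mul, Finset.sum_neg_distrib, hs]

/-- Let `A` be a strongly `Γ`-graded ring.  Every finitely generated graded projective
`A`-module `P` — i.e. a graded direct summand of a finite graded free module `⊕ᵢ A(αᵢ)` —
is a graded direct summand of a finite free graded module `A(0)ᵐ` with trivial shifts.
Graded direct summand means: there are degree-preserving `A`-linear maps `f : P → F` and
`g : F → P` with `g ∘ f = id`, where the `λ`-component of `⊕ᵢ A(αᵢ)` is
`{v | ∀ i, v i ∈ A_{αᵢ+λ}}`. -/
theorem fg_graded_projective_summand_trivial_shifts
    {Γ : Type u} {A : Type u} [AddCommGroup Γ] [DecidableEq Γ] [Ring A]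
    (𝒜 : Γ → AddSubgroup A) [GradedRing 𝒜]
    (hstrong : ∀ lam δ : Γ, AddSubgroup.closure ((𝒜 lam : Set A) * (𝒜 δ : Set A)) = 𝒜 (lam + δ))
    (P : Type u) [AddCommGroup P] [Module A P]
    (𝒬 : Γ → AddSubgroup P) [SetLike.GradedSMul 𝒜 𝒬] [DirectSum.Decomposition 𝒬]
    (hproj : ∃ (k : ℕ) (w : Fin k → Γ) (f : P →ₗ[A] (Fin k → A)) (g : (Fin k → A) →ₗ[A] P),
      (∀ lam : Γ, ∀ x ∈ 𝒬 lam, ∀ i : Fin k, f x i ∈ 𝒜 (w i + lam)) ∧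
      (∀ lam : Γ, ∀ v : Fin k → A, (∀ i : Fin k, v i ∈ 𝒜 (w i + lam)) → g v ∈ 𝒬 lam) ∧
      g.comp f = LinearMap.id) :
    ∃ (m : ℕ) (f : P →ₗ[A] (Fin m → A)) (g : (Fin m → A) →ₗ[A] P),
      (∀ lam : Γ, ∀ x ∈ 𝒬 lam, ∀ i : Fin m, f x i ∈ 𝒜 lam) ∧
      (∀ lam : Γ, ∀ v : Fin m → A, (∀ i : Fin m, v i ∈ 𝒜 lam) → g v ∈ 𝒬 lam) ∧
      g.comp f = LinearMap.id := by
  classical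
  obtain ⟨k, w, f, g, hf, hg, hgf⟩ := hproj
  -- For each shift `w i`, write `1 = ∑ aᵢⱼ * bᵢⱼ` with `aᵢⱼ ∈ 𝒜 (-(w i))`, `bᵢⱼ ∈ 𝒜 (w i)`.
  have key : ∀ i : Fin k, ∃ (n : ℕ) (a b : Fin n → A),
      (∀ j, a j ∈ 𝒜 (-(w i))) ∧ (∀ j, b j ∈ 𝒜 (w i)) ∧ ∑ j, a j * b j = 1 := by
    intro i
    refine exists_fin_repr (𝒜 (-(w i))) (𝒜 (w i)) ?_
    rw [hstrong (-(w i)) (w i), neg_add_cancel]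
    exact SetLike.one_mem_graded 𝒜
  choose n a b ha hb hab using key
  -- Index set for the big free module.
  set I := (i : Fin k) × Fin (n i) with hI
  let e : I ≃ Fin (Fintype.card I) := Fintype.equivFin I
  let T : P →ₗ[A] (Fin (Fintype.card I) → A) :=
    { toFun := fun x => fun c => f x (e.symm c).1 * a (e.symm c).1 (e.symm c).2
      map_add' := by intro x y; funext c; simp [add_mul]
      map_smul' := by intro r x; funext c; simp [mul_assoc] }
  let U : (Fin (Fintype.card I) → A) →ₗ[A] (Fin k → A) :=
    { toFun := fun v => fun i => ∑ j : Fin (n i), v (e ⟨i, j⟩) * b i j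
      map_add' := by intro x y; funext i; simp [add_mul, Finset.sum_add_distrib]
      map_smul' := by
        intro r x; funext i
        simp only [RingHom.id_apply, Pi.smul_apply, smul_eq_mul, Finset.mul_sum, mul_assoc] }
  refine ⟨Fintype.card I, T, g.comp U, ?_, ?_, ?_⟩
  · -- f' degree-preserving
    intro lam x hx c
    have h1 := hf lam x hx (e.symm c).1
    have h2 := ha (e.symm c).1 (e.symm c).2
    have := SetLike.mul_mem_graded h1 h2
    show f x (e.symm c).1 * a (e.symm c).1 (e.symm c).2 ∈ 𝒜 lam
    simpa [add_comm, add_assoc, add_neg_cancel, add_left_comm] using this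
  · -- g' degree-preserving
    intro lam v hv
    refine hg lam _ ?_
    intro i
    show (∑ j : Fin (n i), v (e ⟨i, j⟩) * b i j) ∈ 𝒜 (w i + lam)
    refine AddSubgroup.sum_mem _ fun j _ => ?_
    have := SetLike.mul_mem_graded (hv (e ⟨i, j⟩)) (hb i j)
    simpa [add_comm] using this
  · -- g' ∘ f' = id
    ext x
    show g (U (T x)) = x
    have hUT : U (T x) = f x := by
      funext i
      show (∑ j : Fin (n i),
        (f x (e.symm (e ⟨i, j⟩)).1 * a (e.symm (e ⟨i, j⟩)).1 (e.symm (e ⟨i, j⟩)).2) * b i j)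
          = f x i
      rw [Finset.sum_congr rfl fun (j : Fin (n i)) _ =>
        (by rw [Equiv.symm_apply_apply] :
          (f x (e.symm (e ⟨i, j⟩)).1 * a (e.symm (e ⟨i, j⟩)).1 (e.symm (e ⟨i, j⟩)).2) * b i j
            = (f x i * a i j) * b i j)]
      calc (∑ j : Fin (n i), (f x i * a i j) * b i j)
          = f x i * ∑ j : Fin (n i), a i j * b i j := by
            rw [Finset.mul_sum]; simp [mul_assoc]
        _ = f x i := by rw [hab i, mul_one]
    rw [hUT]
    exact LinearMap.congr_fun hgf x
end
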